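/- Let R be a domain, A a torsion-free R-algebra, M a finitely generated R-module, and α : R → M an injective R-module homomorphism. Then the induced map id_A ⊗ α : A → A ⊗_R M is injective. -/

import Mathlib

open TensorProduct

/-- if `R` is a domain, `A` a torsion-free `R`-algebra, `M` a finitely
generated `R`-module and `α : R → M` injective, then `id_A ⊗ α : A ≅ A ⊗ R → A ⊗ M`
is injective. -/
theorem stmt3 {R A M : Type*} [CommRing R] [IsDomain R] [IsNoetherianRing R]
    [CommRing A] [Algebra R A] [NoZeroSMulDivisors R A]
    [AddCommGroup M] [Module R M] [Module.Finite R M]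
    (α : R →ₗ[R] M) (hα : Function.Injective α) :
    Function.Injective (α.baseChange A) := by
  classical
  set K := FractionRing R
  have hflat : Module.Flat R K := IsLocalization.flat K (nonZeroDivisors R)
  have halg : Function.Injective (Algebra.linearMap R K) :=
    IsFractionRing.injective R K
  -- the element 1 ⊗ α 1 is nonzero in K ⊗ M
  have hKinj : Function.Injective (α.lTensor K) :=
    Module.Flat.lTensor_preserves_injective_linearMap α hα
  set v : K ⊗[R] M := (1 : K) ⊗ₜ[R] (α 1) with hv
  have hvne : v ≠ 0 := by
    have h1 : ((1 : K) ⊗ₜ[R] (1 : R) : K ⊗[R] R) ≠ 0 := by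
      intro h
      have h2 := congrArg (⇑(TensorProduct.rid R K)) h
      rw [TensorProduct.rid_tmul, one_smul, (TensorProduct.rid R K).map_zero] at h2
      exact one_ne_zero h2
    intro h0
    apply h1
    apply hKinj
    simpa using h0
  -- find a dual functional not vanishing on v
  have hdual : ∃ ψ : Module.Dual K (K ⊗[R] M), ψ v ≠ 0 := by
    by_contra hc
    push_neg at hc
    exact hvne ((Module.forall_dual_apply_eq_zero_iff K v).mp hc)
  obtain ⟨ψ, hψ⟩ := hdual
  -- g : M →ₗ[R] K
  set g : M →ₗ[R] K := (ψ.restrictScalars R).comp ((TensorProduct.mk R K M) 1) with hg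
  -- clear denominators on a generating set
  obtain ⟨s, hs⟩ : (⊤ : Submodule R M).FG := Module.Finite.fg_top
  obtain ⟨b, hb⟩ := IsLocalization.exist_integer_multiples (nonZeroDivisors R) s g
  set g' : M →ₗ[R] K := (b : R) • g with hg'
  have hN : ∀ m : M, g' m ∈ LinearMap.range (Algebra.linearMap R K) := by
    have hle : (⊤ : Submodule R M) ≤
        Submodule.comap g' (LinearMap.range (Algebra.linearMap R K)) := by
      rw [← hs]
      apply Submodule.span_le.mpr
      intro m hm
      obtain ⟨a, ha⟩ := hb m hm
      exact ⟨a, by simpa [hg'] using ha⟩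
    intro m
    exact hle (Submodule.mem_top) 
  -- φ : M →ₗ[R] R
  set φ : M →ₗ[R] R :=
    ((LinearEquiv.ofInjective (Algebra.linearMap R K) halg).symm).toLinearMap.comp
      (g'.codRestrict _ hN) with hφdef
  have hφ : ∀ m : M, algebraMap R K (φ m) = g' m := by
    intro m
    have h1 := congrArg Subtype.val
      ((LinearEquiv.ofInjective (Algebra.linearMap R K) halg).apply_symm_apply
        ⟨g' m, hN m⟩)
    rw [LinearEquiv.ofInjective_apply] at h1
    exact h1
  set d : R := φ (α 1) with hd
  have hdne : d ≠ 0 := by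
    intro h0
    have : algebraMap R K d = g' (α 1) := hφ _
    rw [h0, map_zero] at this
    have hb0 : (b : R) ≠ 0 := nonZeroDivisors.coe_ne_zero b
    have : (0 : K) = (b : R) • g (α 1) := by simpa [hg'] using this
    have hgv : g (α 1) = ψ v := by simp [hg, hv]
    rw [hgv, Algebra.smul_def] at this
    have := this.symm
    rcases mul_eq_zero.mp this with h | h
    · exact hb0 ((map_eq_zero_iff (algebraMap R K) (IsFractionRing.injective R K)).mp h)
    · exact hψ h
  -- φ ∘ α = d • id
  have hcomp : φ.comp α = d • (LinearMap.id : R →ₗ[R] R) := by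
    apply LinearMap.ext
    intro r
    have h5 : α r = r • α 1 := by rw [← map_smul, smul_eq_mul, mul_one]
    simp only [LinearMap.comp_apply, LinearMap.smul_apply, LinearMap.id_apply, h5,
      map_smul, ← hd, smul_eq_mul]
    ring
  -- conclude
  rw [← LinearMap.ker_eq_bot, eq_bot_iff]
  intro x hx
  have hx' : (α.baseChange A) x = 0 := hx
  have h2 : ((φ.comp α).baseChange A) x = 0 := by
    rw [LinearMap.baseChange_comp, LinearMap.comp_apply, hx', map_zero]
  rw [hcomp, LinearMap.baseChange_smul, LinearMap.baseChange_id] at h2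
  have h3 : d • x = 0 := h2
  have h4 : d • (TensorProduct.rid R A x) = 0 := by
    rw [← map_smul, h3, map_zero]
  rcases smul_eq_zero.mp h4 with h | h
  · exact absurd h hdne
  · have : x = 0 := by
      have := congrArg (TensorProduct.rid R A).symm h
      simpa using this
    simp [this]
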